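/- arXiv:1906.00105 — 2 statements merged into one kernel-verified Lean document; each statement's English description precedes it below -/
import Mathlib

section
/- Let D ⊆ ℝ^m, let L ∈ ℝ^{m×m}, and let (x̂_j, y_j), j = 1,…,M, be data with x̂_j ∈ D that are consistent with L, i.e. |y_i − y_j| ≤ ‖L(x̂_i − x̂_j)‖₂ for all i, j. Then for every x ∈ D, the uncertainty set 𝒰(x) := { f(x) : f ∈ 𝓛(D, L), f(x̂_j) = y_j for all j = 1,…,M } equals the closed interval [ max_{j=1,…,M} (y_j − ‖L(x − x̂_j)‖₂), min_{j=1,…,M} (y_j + ‖L(x − x̂_j)‖₂) ], which is nonempty. -/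
open Matrix

/-- The matrix-vector product as a map on Euclidean space,
so that `‖mulVecE L v‖` is the Euclidean 2-norm of `L v`. -/
noncomputable def mulVecE {m : ℕ} (L : Matrix (Fin m) (Fin m) ℝ)
    (v : EuclideanSpace ℝ (Fin m)) : EuclideanSpace ℝ (Fin m) :=
  Matrix.toEuclideanCLM (𝕜 := ℝ) L v

/-- The Lipschitz-matrix class `𝓛(D, L)`. -/
def MemLip {m : ℕ} (D : Set (EuclideanSpace ℝ (Fin m))) (L : Matrix (Fin m) (Fin m) ℝ)
    (f : EuclideanSpace ℝ (Fin m) → ℝ) : Prop :=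
  ∀ x₁ ∈ D, ∀ x₂ ∈ D, |f x₁ - f x₂| ≤ ‖mulVecE L (x₁ - x₂)‖

/-- The lower envelope `f₋(x) = max_j (y_j - ‖L(x - x̂_j)‖₂)` determined by data `(x̂_j, y_j)`. -/
noncomputable def lowerEnv {m M : ℕ} (L : Matrix (Fin m) (Fin m) ℝ)
    (xh : Fin M → EuclideanSpace ℝ (Fin m)) (y : Fin M → ℝ)
    (x : EuclideanSpace ℝ (Fin m)) : ℝ :=
  ⨆ j, (y j - ‖mulVecE L (x - xh j)‖)

/-- The upper envelope `f₊(x) = min_j (y_j + ‖L(x - x̂_j)‖₂)` determined by data `(x̂_j, y_j)`. -/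
noncomputable def upperEnv {m M : ℕ} (L : Matrix (Fin m) (Fin m) ℝ)
    (xh : Fin M → EuclideanSpace ℝ (Fin m)) (y : Fin M → ℝ)
    (x : EuclideanSpace ℝ (Fin m)) : ℝ :=
  ⨅ j, (y j + ‖mulVecE L (x - xh j)‖)

/-- The central approximation `f̄ = (f₋ + f₊)/2`. -/
noncomputable def centralApprox {m M : ℕ} (L : Matrix (Fin m) (Fin m) ℝ)
    (xh : Fin M → EuclideanSpace ℝ (Fin m)) (y : Fin M → ℝ)
    (x : EuclideanSpace ℝ (Fin m)) : ℝ :=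
  (lowerEnv L xh y x + upperEnv L xh y x) / 2
lemma mulVecE_comm {m : ℕ} (L : Matrix (Fin m) (Fin m) ℝ)
    (a b : EuclideanSpace ℝ (Fin m)) :
    ‖mulVecE L (a - b)‖ = ‖mulVecE L (b - a)‖ := by
  unfold mulVecE
  rw [← neg_sub b a, map_neg, norm_neg]

lemma mulVecE_tri {m : ℕ} (L : Matrix (Fin m) (Fin m) ℝ)
    (a b c : EuclideanSpace ℝ (Fin m)) :
    ‖mulVecE L (a - c)‖ ≤ ‖mulVecE L (a - b)‖ + ‖mulVecE L (b - c)‖ := by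
  unfold mulVecE
  have h : a - c = (a - b) + (b - c) := by abel
  rw [h, map_add]
  exact norm_add_le _ _

lemma mulVecE_zero {m : ℕ} (L : Matrix (Fin m) (Fin m) ℝ)
    (a : EuclideanSpace ℝ (Fin m)) : ‖mulVecE L (a - a)‖ = 0 := by
  unfold mulVecE
  simp

/-- for data consistent with `L`, the pointwise uncertainty set at `x ∈ D` equals
the closed interval `[max_j (y_j - ‖L(x - x̂_j)‖), min_j (y_j + ‖L(x - x̂_j)‖)]`, which is
nonempty. -/
theorem uncertainty_set_eq_Icc {m M : ℕ} (hM : 0 < M)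
    (D : Set (EuclideanSpace ℝ (Fin m))) (L : Matrix (Fin m) (Fin m) ℝ)
    (xh : Fin M → EuclideanSpace ℝ (Fin m)) (y : Fin M → ℝ)
    (hx : ∀ j, xh j ∈ D)
    (hcons : ∀ i j, |y i - y j| ≤ ‖mulVecE L (xh i - xh j)‖)
    (x : EuclideanSpace ℝ (Fin m)) (hxD : x ∈ D) :
    {t : ℝ | ∃ f : EuclideanSpace ℝ (Fin m) → ℝ,
        MemLip D L f ∧ (∀ j, f (xh j) = y j) ∧ f x = t}
      = Set.Icc (lowerEnv L xh y x) (upperEnv L xh y x) ∧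
      (Set.Icc (lowerEnv L xh y x) (upperEnv L xh y x)).Nonempty := by
  have : Nonempty (Fin M) := ⟨⟨0, hM⟩⟩
  have hle : lowerEnv L xh y x ≤ upperEnv L xh y x := by
    apply ciSup_le
    intro i
    apply le_ciInf
    intro j
    have h1 := (abs_le.mp (hcons i j)).2
    have h2 := mulVecE_tri L (xh i) x (xh j)
    have h3 := mulVecE_comm L (xh i) x
    linarith
  constructor
  · ext t
    simp only [Set.mem_setOf_eq, Set.mem_Icc]
    constructor
    · rintro ⟨f, hf, hfy, rfl⟩
      constructor
      · apply ciSup_le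
        intro j
        have := (abs_le.mp (hf x hxD (xh j) (hx j))).1
        rw [hfy j] at this
        linarith
      · apply le_ciInf
        intro j
        have := (abs_le.mp (hf x hxD (xh j) (hx j))).2
        rw [hfy j] at this
        linarith
    · rintro ⟨ht1, ht2⟩
      set f : EuclideanSpace ℝ (Fin m) → ℝ :=
        fun z => min (upperEnv L xh y z) (t + ‖mulVecE L (z - x)‖) with hfdef
      have hU : ∀ a b : EuclideanSpace ℝ (Fin m),
          upperEnv L xh y a ≤ upperEnv L xh y b + ‖mulVecE L (a - b)‖ := by
        intro a b
        rw [upperEnv, upperEnv, ciInf_add (Finite.bddBelow_range _)]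
        apply ciInf_mono (Finite.bddBelow_range _)
        intro j
        have := mulVecE_tri L a b (xh j)
        linarith
      have key : ∀ a b : EuclideanSpace ℝ (Fin m),
          f a - f b ≤ ‖mulVecE L (a - b)‖ := by
        intro a b
        rw [sub_le_iff_le_add]
        have h1 : f a ≤ upperEnv L xh y b + ‖mulVecE L (a - b)‖ :=
          le_trans (min_le_left _ _) (hU a b)
        have h2 : f a ≤ (t + ‖mulVecE L (b - x)‖) + ‖mulVecE L (a - b)‖ := by
          refine le_trans (min_le_right _ _) ?_
          have := mulVecE_tri L a b x
          linarith
        calc f a ≤ min (upperEnv L xh y b + ‖mulVecE L (a - b)‖)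
              ((t + ‖mulVecE L (b - x)‖) + ‖mulVecE L (a - b)‖) := le_min h1 h2
          _ = f b + ‖mulVecE L (a - b)‖ := min_add_add_right _ _ _
          _ = ‖mulVecE L (a - b)‖ + f b := add_comm _ _
      refine ⟨f, ?_, ?_, ?_⟩
      · intro z₁ hz₁ z₂ hz₂
        rw [abs_sub_le_iff]
        exact ⟨key z₁ z₂, by rw [mulVecE_comm]; exact key z₂ z₁⟩
      · intro i
        have hUi : upperEnv L xh y (xh i) = y i := by
          apply le_antisymm
          · have := ciInf_le (f := fun j => y j + ‖mulVecE L (xh i - xh j)‖)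
              (Finite.bddBelow_range _) i
            rw [upperEnv]
            simpa [mulVecE, sub_self] using this
          · apply le_ciInf
            intro j
            have := (abs_le.mp (hcons i j)).2
            linarith
        have hti : y i ≤ t + ‖mulVecE L (xh i - x)‖ := by
          have h1 : y i - ‖mulVecE L (x - xh i)‖ ≤ lowerEnv L xh y x := by
            rw [lowerEnv]
            exact le_ciSup (f := fun j => y j - ‖mulVecE L (x - xh j)‖) (Finite.bddAbove_range _) i
          have h2 := mulVecE_comm L (xh i) x
          linarith
        simp only [hfdef]
        rw [hUi]
        exact min_eq_left hti
      · simp only [hfdef]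
        rw [mulVecE_zero, add_zero]
        exact min_eq_right ht2
  · exact ⟨_, Set.left_mem_Icc.mpr hle⟩
end

section
/- Let D ⊆ ℝ^m, let L ∈ ℝ^{m×m}, and let (x̂_j, y_j), j = 1,…,M, be data with x̂_j ∈ D that are consistent with L. Let f̄ be the central approximation. Then for every x ∈ D, sup{ |f(x) − f̄(x)| : f ∈ 𝓛(D, L), f(x̂_j) = y_j ∀j } = ½ ( min_{j} (y_j + ‖L(x − x̂_j)‖₂) − max_{j} (y_j − ‖L(x − x̂_j)‖₂) ); in particular, when y_j = 0 for all j, this worst-case pointwise error equals min_{j=1,…,M} ‖L(x − x̂_j)‖₂. -/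
open Matrix

section aux

variable {m M : ℕ}

lemma mulVecE_sub {m : ℕ} (L : Matrix (Fin m) (Fin m) ℝ)
    (a b : EuclideanSpace ℝ (Fin m)) :
    mulVecE L (a - b) = mulVecE L a - mulVecE L b := by
  simp [mulVecE, map_sub]

lemma norm_mulVecE_comm (L : Matrix (Fin m) (Fin m) ℝ)
    (a b : EuclideanSpace ℝ (Fin m)) :
    ‖mulVecE L (a - b)‖ = ‖mulVecE L (b - a)‖ := by
  rw [mulVecE_sub, mulVecE_sub, norm_sub_rev]

lemma norm_mulVecE_lip (L : Matrix (Fin m) (Fin m) ℝ)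
    (x₁ x₂ z : EuclideanSpace ℝ (Fin m)) :
    ‖mulVecE L (x₁ - z)‖ - ‖mulVecE L (x₂ - z)‖ ≤ ‖mulVecE L (x₁ - x₂)‖ := by
  have hd : (x₁ - z) - (x₂ - z) = x₁ - x₂ := by abel
  have h : mulVecE L (x₁ - z) - mulVecE L (x₂ - z) = mulVecE L (x₁ - x₂) := by
    rw [← mulVecE_sub, hd]
  calc ‖mulVecE L (x₁ - z)‖ - ‖mulVecE L (x₂ - z)‖
      ≤ ‖mulVecE L (x₁ - z) - mulVecE L (x₂ - z)‖ := norm_sub_norm_le _ _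
    _ = ‖mulVecE L (x₁ - x₂)‖ := by rw [h]

lemma iSup_neg_eq_neg_iInf (hM : 0 < M) (a : Fin M → ℝ) :
    (⨆ j, -(a j)) = -⨅ j, a j := by
  haveI : Nonempty (Fin M) := Fin.pos_iff_nonempty.mp hM
  apply le_antisymm
  · apply ciSup_le
    intro j
    exact neg_le_neg (ciInf_le (Set.Finite.bddBelow (Set.finite_range _)) j)
  · obtain ⟨j0, hj0⟩ := Finite.exists_min a
    have hinf : (⨅ j, a j) = a j0 :=
      le_antisymm (ciInf_le (Set.Finite.bddBelow (Set.finite_range _)) j0) (le_ciInf hj0)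
    rw [hinf]
    exact le_ciSup (f := fun j => -(a j)) (Set.Finite.bddAbove (Set.finite_range _)) j0

end aux

section main

variable {m M : ℕ}

lemma upperEnv_memLip (hM : 0 < M) (D : Set (EuclideanSpace ℝ (Fin m)))
    (L : Matrix (Fin m) (Fin m) ℝ) (xh : Fin M → EuclideanSpace ℝ (Fin m)) (y : Fin M → ℝ) :
    MemLip D L (upperEnv L xh y) := by
  haveI : Nonempty (Fin M) := Fin.pos_iff_nonempty.mp hM
  have key : ∀ a b : EuclideanSpace ℝ (Fin m),
      upperEnv L xh y a - upperEnv L xh y b ≤ ‖mulVecE L (a - b)‖ := by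
    intro a b
    rw [upperEnv, upperEnv, sub_le_iff_le_add, ← sub_le_iff_le_add']
    apply le_ciInf
    intro j
    have h1 : (⨅ j, (y j + ‖mulVecE L (a - xh j)‖)) ≤ y j + ‖mulVecE L (a - xh j)‖ :=
      ciInf_le (Set.Finite.bddBelow (Set.finite_range _)) j
    have h2 : ‖mulVecE L (a - xh j)‖ - ‖mulVecE L (b - xh j)‖ ≤ ‖mulVecE L (a - b)‖ :=
      norm_mulVecE_lip L a b (xh j)
    linarith
  intro x₁ _ x₂ _
  rw [abs_sub_le_iff]
  refine ⟨key x₁ x₂, ?_⟩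
  have := key x₂ x₁
  rwa [norm_mulVecE_comm L x₂ x₁] at this

lemma upperEnv_interp (hM : 0 < M) (L : Matrix (Fin m) (Fin m) ℝ)
    (xh : Fin M → EuclideanSpace ℝ (Fin m)) (y : Fin M → ℝ)
    (hcons : ∀ i j, |y i - y j| ≤ ‖mulVecE L (xh i - xh j)‖) (i : Fin M) :
    upperEnv L xh y (xh i) = y i := by
  haveI : Nonempty (Fin M) := Fin.pos_iff_nonempty.mp hM
  apply le_antisymm
  · have : upperEnv L xh y (xh i) ≤ y i + ‖mulVecE L (xh i - xh i)‖ :=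
      ciInf_le (Set.Finite.bddBelow (Set.finite_range _)) i
    simpa [mulVecE] using this
  · apply le_ciInf
    intro j
    have := (abs_le.mp (hcons i j)).2
    linarith

lemma interp_sandwich (hM : 0 < M) (D : Set (EuclideanSpace ℝ (Fin m)))
    (L : Matrix (Fin m) (Fin m) ℝ) (xh : Fin M → EuclideanSpace ℝ (Fin m)) (y : Fin M → ℝ)
    (hx : ∀ j, xh j ∈ D) (f : EuclideanSpace ℝ (Fin m) → ℝ) (hf : MemLip D L f)
    (hfy : ∀ j, f (xh j) = y j) (x : EuclideanSpace ℝ (Fin m)) (hxD : x ∈ D) :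
    lowerEnv L xh y x ≤ f x ∧ f x ≤ upperEnv L xh y x := by
  haveI : Nonempty (Fin M) := Fin.pos_iff_nonempty.mp hM
  constructor
  · apply ciSup_le
    intro j
    have h := abs_le.mp (hf x hxD (xh j) (hx j))
    rw [hfy j] at h
    linarith [h.1]
  · apply le_ciInf
    intro j
    have h := abs_le.mp (hf x hxD (xh j) (hx j))
    rw [hfy j] at h
    linarith [h.2]

lemma lowerEnv_le_upperEnv (hM : 0 < M) (L : Matrix (Fin m) (Fin m) ℝ)
    (xh : Fin M → EuclideanSpace ℝ (Fin m)) (y : Fin M → ℝ)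
    (hcons : ∀ i j, |y i - y j| ≤ ‖mulVecE L (xh i - xh j)‖)
    (x : EuclideanSpace ℝ (Fin m)) :
    lowerEnv L xh y x ≤ upperEnv L xh y x := by
  haveI : Nonempty (Fin M) := Fin.pos_iff_nonempty.mp hM
  apply ciSup_le
  intro i
  apply le_ciInf
  intro j
  have h1 := (abs_le.mp (hcons i j)).2
  have h2 : ‖mulVecE L (xh i - xh j)‖ ≤ ‖mulVecE L (x - xh j)‖ + ‖mulVecE L (x - xh i)‖ := by
    have hd : mulVecE L (xh i - xh j) = mulVecE L (x - xh j) - mulVecE L (x - xh i) := by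
      rw [← mulVecE_sub]
      have : (x - xh j) - (x - xh i) = xh i - xh j := by abel
      rw [this]
    rw [hd]
    exact norm_sub_le _ _
  linarith

end main

/-- the worst-case pointwise error of the central approximation equals half the gap
between the upper and lower envelopes; in particular, for zero data it equals
`min_j ‖L(x - x̂_j)‖₂`. -/
theorem centralApprox_worst_case_error {m M : ℕ} (hM : 0 < M)
    (D : Set (EuclideanSpace ℝ (Fin m))) (L : Matrix (Fin m) (Fin m) ℝ)
    (xh : Fin M → EuclideanSpace ℝ (Fin m)) (y : Fin M → ℝ)
    (hx : ∀ j, xh j ∈ D)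
    (hcons : ∀ i j, |y i - y j| ≤ ‖mulVecE L (xh i - xh j)‖)
    (x : EuclideanSpace ℝ (Fin m)) (hxD : x ∈ D) :
    sSup {e : ℝ | ∃ f : EuclideanSpace ℝ (Fin m) → ℝ,
        MemLip D L f ∧ (∀ j, f (xh j) = y j) ∧ e = |f x - centralApprox L xh y x|}
      = (upperEnv L xh y x - lowerEnv L xh y x) / 2 ∧
      ((∀ j, y j = 0) →
        sSup {e : ℝ | ∃ f : EuclideanSpace ℝ (Fin m) → ℝ,
            MemLip D L f ∧ (∀ j, f (xh j) = y j) ∧ e = |f x - centralApprox L xh y x|}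
          = ⨅ j, ‖mulVecE L (x - xh j)‖) := by
  haveI : Nonempty (Fin M) := Fin.pos_iff_nonempty.mp hM
  have hlu : lowerEnv L xh y x ≤ upperEnv L xh y x := lowerEnv_le_upperEnv hM L xh y hcons x
  have hmain : sSup {e : ℝ | ∃ f : EuclideanSpace ℝ (Fin m) → ℝ,
      MemLip D L f ∧ (∀ j, f (xh j) = y j) ∧ e = |f x - centralApprox L xh y x|}
      = (upperEnv L xh y x - lowerEnv L xh y x) / 2 := by
    apply IsGreatest.csSup_eq
    constructor
    · refine ⟨upperEnv L xh y, upperEnv_memLip hM D L xh y,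
        fun j => upperEnv_interp hM L xh y hcons j, ?_⟩
      rw [centralApprox, abs_of_nonneg (by linarith)]
      ring
    · rintro e ⟨f, hf, hfy, rfl⟩
      obtain ⟨h1, h2⟩ := interp_sandwich hM D L xh y hx f hf hfy x hxD
      rw [centralApprox, abs_le]
      constructor <;> linarith
  refine ⟨hmain, fun hy => ?_⟩
  rw [hmain]
  have hneg : lowerEnv L xh y x = -upperEnv L xh y x := by
    rw [lowerEnv, upperEnv]
    simp only [hy, zero_sub, zero_add]
    exact iSup_neg_eq_neg_iInf hM _
  have hu2 : upperEnv L xh y x = ⨅ j, ‖mulVecE L (x - xh j)‖ := by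
    rw [upperEnv]
    simp [hy]
  rw [hneg, hu2]
  ring
end
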